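/- For every ℓ ∈ ℝⁿ and every t ∈ ℕ, ∫_Δ (ℓᵀx)ᵗ dx = (t!/(n+t)!) · E_t(ℓ), where E_t(ℓ) = Σ_{|α|=t} ℓ^α is the sum over all monomials of degree t evaluated at ℓ and Δ is the canonical simplex in ℝⁿ. -/

import Mathlib

open MeasureTheory Finset

/-- `Esum n t y = Σ_{|α| = t} y^α`, the homogeneous polynomial of degree `t`
with all coefficients equal to `1`, evaluated at `y`. -/
noncomputable def Esum (n t : ℕ) (y : Fin n → ℝ) : ℝ :=
  ∑ α ∈ Finset.univ.filter (fun α : Fin n → Fin (t + 1) => ∑ i, (α i : ℕ) = t),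
    ∏ i, y i ^ (α i : ℕ)

def S (n : ℕ) (c : ℝ) : Set (Fin n → ℝ) := {x | (∀ i, 0 ≤ x i) ∧ ∑ i, x i ≤ c}

lemma isClosed_S (n : ℕ) (c : ℝ) : IsClosed (S n c) := by
  have : S n c = (⋂ i, {x : Fin n → ℝ | 0 ≤ x i}) ∩ {x | ∑ i, x i ≤ c} := by
    ext x; simp [S, Set.mem_iInter]
  rw [this]
  exact (isClosed_iInter fun i => isClosed_le continuous_const (continuous_apply i)).inter
    (isClosed_le (by continuity) continuous_const)

lemma measurableSet_S (n : ℕ) (c : ℝ) : MeasurableSet (S n c) :=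
  (isClosed_S n c).measurableSet

lemma isCompact_S (n : ℕ) (c : ℝ) : IsCompact (S n c) := by
  refine (isCompact_Icc (a := (0 : Fin n → ℝ)) (b := fun _ => c)).of_isClosed_subset
    (isClosed_S n c) ?_
  rintro x ⟨hx0, hxs⟩
  refine ⟨hx0, fun i => ?_⟩
  calc x i ≤ ∑ j, x j := Finset.single_le_sum (fun j _ => hx0 j) (mem_univ i)
  _ ≤ c := hxs

lemma beta_nat (a b : ℕ) :
    ∫ x in (0:ℝ)..1, x ^ a * (1 - x) ^ b
      = (a.factorial * b.factorial : ℝ) / ((a + b + 1).factorial : ℝ) := by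
  have h := Complex.Gamma_mul_Gamma_eq_betaIntegral
    (s := (a + 1 : ℂ)) (t := (b + 1 : ℂ)) (by simp [Complex.add_re]; positivity)
    (by simp [Complex.add_re]; positivity)
  rw [show ((a:ℂ) + 1) + ((b:ℂ) + 1) = (((a + b + 1 : ℕ) : ℂ) + 1) by push_cast; ring] at h
  rw [show ((a:ℂ) + 1) = (((a:ℕ):ℂ) + 1) by norm_num,
      show ((b:ℂ) + 1) = (((b:ℕ):ℂ) + 1) by norm_num] at h
  rw [Complex.Gamma_nat_eq_factorial, Complex.Gamma_nat_eq_factorial,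
      Complex.Gamma_nat_eq_factorial] at h
  have hbeta : Complex.betaIntegral ((a:ℕ) + 1) ((b:ℕ) + 1)
      = ((∫ x in (0:ℝ)..1, x ^ a * (1 - x) ^ b : ℝ) : ℂ) := by
    rw [Complex.betaIntegral, ← intervalIntegral.integral_ofReal]
    refine intervalIntegral.integral_congr fun x _ => ?_
    simp only [add_sub_cancel_right]
    rw [Complex.cpow_natCast, Complex.cpow_natCast]
    push_cast
    ring
  rw [hbeta] at h
  have hfac : ((a + b + 1).factorial : ℂ) ≠ 0 := by
    exact_mod_cast Nat.cast_ne_zero.2 (a + b + 1).factorial_ne_zero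
  field_simp
  rw [mul_comm]; exact_mod_cast h.symm

lemma beta_scaled (a b : ℕ) (c : ℝ) :
    ∫ x in (0:ℝ)..c, x ^ a * (c - x) ^ b
      = (a.factorial * b.factorial : ℝ) / ((a + b + 1).factorial : ℝ) * c ^ (a + b + 1) := by
  rcases eq_or_ne c 0 with rfl | hc
  · simp
  · have h := intervalIntegral.integral_comp_mul_left
      (f := fun x : ℝ => x ^ a * (c - x) ^ b) (a := 0) (b := 1) hc
    simp only [mul_zero, mul_one] at h
    have h2 : ∀ x : ℝ, (c * x) ^ a * (c - c * x) ^ b = c ^ (a + b) * (x ^ a * (1 - x) ^ b) := by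
      intro x
      rw [show c - c * x = c * (1 - x) by ring, mul_pow, mul_pow]
      ring
    simp only [h2] at h
    rw [intervalIntegral.integral_const_mul, beta_nat] at h
    have := congrArg (fun z => c * z) h
    simp only [smul_eq_mul, ← mul_assoc] at this
    rw [mul_inv_cancel₀ hc, one_mul] at this
    rw [← this]
    ring

lemma key : ∀ (n : ℕ) (k : Fin n → ℕ) (c : ℝ), 0 ≤ c →
    ∫⁻ x, Set.indicator (S n c) (fun x => ENNReal.ofReal (∏ i, x i ^ k i)) x
      = ENNReal.ofReal
        ((∏ i, ((k i).factorial : ℝ)) / ((n + ∑ i, k i).factorial : ℝ) * c ^ (n + ∑ i, k i)) := by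
  intro n
  induction n with
  | zero =>
    intro k c hc
    have hS : S 0 c = Set.univ := by
      ext x; simp [S, hc]
    simp only [hS, Finset.univ_eq_empty, Finset.prod_empty, Finset.sum_empty,
      Set.indicator_univ, ENNReal.ofReal_one, lintegral_const, one_mul]
    rw [show (volume : Measure (Fin 0 → ℝ)) Set.univ = 1 by
      rw [volume_pi, Measure.pi_univ]; simp]
    norm_num
  | succ n ih =>
    intro k c hc
    set a := k 0 with ha
    set m := ∑ j, k (Fin.succ j) with hm
    set K : ℝ := (∏ j, ((k (Fin.succ j)).factorial : ℝ)) / ((n + m).factorial : ℝ) with hK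
    -- membership split
    have hmem : ∀ (y : ℝ) (z : Fin n → ℝ),
        (Fin.cons y z ∈ S (n + 1) c) ↔ (y ∈ Set.Icc (0:ℝ) c ∧ z ∈ S n (c - y)) := by
      intro y z
      constructor
      · rintro ⟨h0, hs⟩
        rw [Fin.sum_cons] at hs
        have hy : 0 ≤ y := by simpa using h0 0
        have hz : ∀ j, 0 ≤ z j := fun j => by simpa using h0 j.succ
        have hzs : 0 ≤ ∑ j, z j := Finset.sum_nonneg fun j _ => hz j
        exact ⟨⟨hy, by linarith⟩, hz, by linarith⟩
      · rintro ⟨⟨hy0, hyc⟩, hz, hzs⟩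
        refine ⟨fun i => ?_, ?_⟩
        · refine Fin.cases ?_ ?_ i <;> simp [hy0, hz]
        · rw [Fin.sum_cons]; linarith
    have hsplit : ∀ (y : ℝ) (z : Fin n → ℝ),
        Set.indicator (S (n + 1) c) (fun x => ENNReal.ofReal (∏ i, x i ^ k i)) (Fin.cons y z)
          = Set.indicator (Set.Icc (0:ℝ) c) (fun y => ENNReal.ofReal (y ^ a)) y
            * Set.indicator (S n (c - y))
                (fun z => ENNReal.ofReal (∏ j, z j ^ k (Fin.succ j))) z := by
      intro y z
      by_cases hmem' : Fin.cons y z ∈ S (n + 1) c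
      · obtain ⟨hy, hz⟩ := (hmem y z).1 hmem'
        rw [Set.indicator_of_mem hmem', Set.indicator_of_mem hy, Set.indicator_of_mem hz]
        rw [← ENNReal.ofReal_mul (pow_nonneg hy.1 _)]
        congr 1
        rw [Fin.prod_univ_succ]
        simp [ha]
      · rw [Set.indicator_of_notMem hmem']
        rcases not_and_or.1 ((hmem y z).not.1 hmem') with h | h
        · rw [Set.indicator_of_notMem h, zero_mul]
        · rw [Set.indicator_of_notMem h, mul_zero]
    -- Fubini
    have hmp := volume_preserving_piFinSuccAbove (fun _ : Fin (n + 1) => ℝ) 0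
    set F : (Fin (n + 1) → ℝ) → ENNReal :=
      Set.indicator (S (n + 1) c) (fun x => ENNReal.ofReal (∏ i, x i ^ k i)) with hF
    have hFmeas : Measurable F := by
      refine Measurable.indicator ?_ (measurableSet_S _ _)
      exact ENNReal.measurable_ofReal.comp
        (Finset.measurable_prod _ fun i _ => (measurable_pi_apply i).pow_const _)
    have h1 := hmp.lintegral_comp_emb (MeasurableEquiv.measurableEmbedding _)
      (fun p => F ((MeasurableEquiv.piFinSuccAbove (fun _ : Fin (n+1) => ℝ) 0).symm p))
    simp only [MeasurableEquiv.symm_apply_apply] at h1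
    rw [h1, Measure.volume_eq_prod, lintegral_prod _ (by
      exact (hFmeas.comp (MeasurableEquiv.measurable _)).aemeasurable)]
    have h2 : ∀ (y : ℝ) (z : Fin n → ℝ),
        F ((MeasurableEquiv.piFinSuccAbove (fun _ : Fin (n+1) => ℝ) 0).symm (y, z))
          = F (Fin.cons y z) := by
      intro y z
      congr 1
      simp [MeasurableEquiv.piFinSuccAbove, Fin.insertNthEquiv, Fin.insertNth_zero]
    simp only [h2, hsplit]
    -- inner integral
    have h3 : ∀ y : ℝ,
        ∫⁻ z, Set.indicator (Set.Icc (0:ℝ) c) (fun y => ENNReal.ofReal (y ^ a)) y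
            * Set.indicator (S n (c - y))
                (fun z => ENNReal.ofReal (∏ j, z j ^ k (Fin.succ j))) z
          = Set.indicator (Set.Icc (0:ℝ) c)
              (fun y => ENNReal.ofReal (y ^ a * (K * (c - y) ^ (n + m)))) y := by
      intro y
      rw [lintegral_const_mul' _ _ (by
        by_cases h : y ∈ Set.Icc (0:ℝ) c
        · simp [Set.indicator_of_mem h]
        · simp [Set.indicator_of_notMem h])]
      by_cases h : y ∈ Set.Icc (0:ℝ) c
      · rw [Set.indicator_of_mem h, Set.indicator_of_mem h, ih _ (c - y) (by linarith [h.2]),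
          ← ENNReal.ofReal_mul (pow_nonneg h.1 _)]
      · rw [Set.indicator_of_notMem h, Set.indicator_of_notMem h, zero_mul]
    simp only [h3]
    rw [lintegral_indicator measurableSet_Icc]
    -- to real integral
    have hKnn : 0 ≤ K := by
      apply div_nonneg
      · exact Finset.prod_nonneg fun j _ => by positivity
      · positivity
    have hInt : IntegrableOn (fun y : ℝ => y ^ a * (K * (c - y) ^ (n + m))) (Set.Icc 0 c) := by
      apply Continuous.integrableOn_Icc
      exact (continuous_pow a).mul
        (continuous_const.mul ((continuous_const.sub continuous_id).pow _))
    have hnn : 0 ≤ᵐ[volume.restrict (Set.Icc (0:ℝ) c)]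
        fun y : ℝ => y ^ a * (K * (c - y) ^ (n + m)) := by
      refine (ae_restrict_iff' measurableSet_Icc).2 (ae_of_all _ fun y hy => ?_)
      have h1 : (0:ℝ) ≤ y := hy.1
      have h2 : y ≤ c := hy.2
      have : (0:ℝ) ≤ c - y := by linarith
      positivity
    rw [← ofReal_integral_eq_lintegral_ofReal hInt hnn]
    congr 1
    -- real computation
    have h4 : ∫ y in Set.Icc (0:ℝ) c, y ^ a * (K * (c - y) ^ (n + m))
        = K * ((a.factorial : ℝ) * ((n + m).factorial : ℝ) / ((a + (n + m) + 1).factorial : ℝ)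
            * c ^ (a + (n + m) + 1)) := by
      rw [MeasureTheory.integral_Icc_eq_integral_Ioc, ← intervalIntegral.integral_of_le hc]
      rw [show (fun y : ℝ => y ^ a * (K * (c - y) ^ (n + m)))
          = fun y : ℝ => K * (y ^ a * (c - y) ^ (n + m)) by funext y; ring]
      rw [intervalIntegral.integral_const_mul, beta_scaled]
    rw [h4]
    have hprod : (∏ i, ((k i).factorial : ℝ))
        = (a.factorial : ℝ) * ∏ j, ((k (Fin.succ j)).factorial : ℝ) := by
      rw [Fin.prod_univ_succ]
    have hsum : ∑ i, k i = a + m := by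
      rw [Fin.sum_univ_succ]
    have hexp : n + 1 + (a + m) = a + (n + m) + 1 := by omega
    rw [hprod, hsum, hexp, hK]
    have hq : ((n + m).factorial : ℝ) ≠ 0 := by positivity
    field_simp

lemma sum_piAntidiag_eq_Esum (n t : ℕ) (ℓ : Fin n → ℝ) :
    ∑ k ∈ piAntidiag (univ : Finset (Fin n)) t, ∏ i, ℓ i ^ k i = Esum n t ℓ := by
  unfold Esum
  have hlt : ∀ k ∈ piAntidiag (univ : Finset (Fin n)) t, ∀ i, k i < t + 1 := by
    intro k hk i
    have h1 := (Finset.mem_piAntidiag.1 hk).1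
    have h2 : k i ≤ ∑ j, k j := Finset.single_le_sum (fun j _ => Nat.zero_le _) (mem_univ i)
    exact Nat.lt_succ_of_le (h1 ▸ h2)
  refine Finset.sum_nbij' (i := fun k i => if hk : k i < t + 1 then (⟨k i, hk⟩ : Fin (t+1)) else 0)
    (j := fun α i => (α i : ℕ)) ?_ ?_ ?_ ?_ ?_
  · intro k hk
    simp only [mem_filter, mem_univ, true_and]
    have : ∀ i : Fin n,
        ((if hk' : k i < t + 1 then (⟨k i, hk'⟩ : Fin (t+1)) else 0 : Fin (t+1)) : ℕ) = k i :=
      fun i => by rw [dif_pos (hlt k hk i)]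
    rw [Finset.sum_congr rfl fun i _ => this i]
    exact (Finset.mem_piAntidiag.1 hk).1
  · intro α hα
    simp only [mem_filter, mem_univ, true_and] at hα
    rw [Finset.mem_piAntidiag]
    exact ⟨hα, fun i _ => mem_univ i⟩
  · intro k hk
    funext i
    simp only
    rw [dif_pos (hlt k hk i)]
  · intro α hα
    funext i
    simp only
    rw [dif_pos (α i).2]
  · intro k hk
    refine Finset.prod_congr rfl fun i _ => ?_
    simp only
    rw [dif_pos (hlt k hk i)]

lemma integral_monomial (n : ℕ) (k : Fin n → ℕ) :
    ∫ x in S n 1, ∏ i, x i ^ k i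
      = (∏ i, ((k i).factorial : ℝ)) / ((n + ∑ i, k i).factorial : ℝ) := by
  have hmeas : Measurable fun x : Fin n → ℝ => ∏ i, x i ^ k i :=
    Finset.measurable_prod _ fun i _ => (measurable_pi_apply i).pow_const _
  rw [MeasureTheory.integral_eq_lintegral_of_nonneg_ae
    ((ae_restrict_iff' (measurableSet_S _ _)).2 (ae_of_all _ fun x hx =>
      Finset.prod_nonneg fun i _ => pow_nonneg (hx.1 i) _))
    hmeas.aestronglyMeasurable]
  rw [← lintegral_indicator (measurableSet_S n 1), key n k 1 zero_le_one]
  rw [ENNReal.toReal_ofReal (by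
    apply mul_nonneg _ (by positivity)
    apply div_nonneg (Finset.prod_nonneg fun i _ => by positivity) (by positivity))]
  simp

theorem integral_pow_linear_form_simplex (n t : ℕ) (ℓ : Fin n → ℝ) :
    ∫ x in {x : Fin n → ℝ | (∀ i, 0 ≤ x i) ∧ ∑ i, x i ≤ 1}, (∑ i, ℓ i * x i) ^ t =
      ((Nat.factorial t : ℝ) / (Nat.factorial (n + t) : ℝ)) * Esum n t ℓ := by
  show ∫ x in S n 1, (∑ i, ℓ i * x i) ^ t = _
  have hexp : ∀ x : Fin n → ℝ, (∑ i, ℓ i * x i) ^ t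
      = ∑ k ∈ piAntidiag (univ : Finset (Fin n)) t,
          ((Nat.multinomial univ k : ℝ) * ∏ i, ℓ i ^ k i) * ∏ i, x i ^ k i := by
    intro x
    rw [Finset.sum_pow_eq_sum_piAntidiag]
    refine Finset.sum_congr rfl fun k _ => ?_
    rw [mul_assoc, ← Finset.prod_mul_distrib]
    simp_rw [mul_pow]
  simp_rw [hexp]
  rw [MeasureTheory.integral_finset_sum _ (fun k _ => by
    apply Integrable.const_mul
    exact ContinuousOn.integrableOn_compact (isCompact_S n 1)
      (continuous_finset_prod _ fun i _ => (continuous_apply i).pow _).continuousOn)]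
  simp_rw [integral_const_mul, integral_monomial]
  rw [← sum_piAntidiag_eq_Esum n t ℓ, Finset.mul_sum]
  refine Finset.sum_congr rfl fun k hk => ?_
  have hsum : ∑ i, k i = t := (Finset.mem_piAntidiag.1 hk).1
  have hspec : (∏ i, (k i).factorial) * Nat.multinomial univ k = t.factorial := by
    rw [Nat.multinomial_spec, hsum]
  have hfac : ((n + t).factorial : ℝ) ≠ 0 := by positivity
  rw [hsum]
  have : ((Nat.multinomial univ k : ℝ)) * (∏ i, ((k i).factorial : ℝ)) = (t.factorial : ℝ) := by
    rw [← Nat.cast_prod, ← Nat.cast_mul, mul_comm, hspec]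
  field_simp
  linear_combination (∏ i, ℓ i ^ k i) * this
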